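/- Let n ≥ 1 and let M be an integer with M ≥ 4ⁿ, and set d₀ = ⌊M^{1/n}/4⌋ (floor of one quarter of the real n-th root of M). Then the number of vectors x ∈ {0, 1, …, M−1}ⁿ for which there exists a nonzero c ∈ ℤⁿ with |cᵢ| ≤ d₀ for all i and Σ_{i=1}^n cᵢxᵢ = 0 is at most (3/4)ⁿ · Mⁿ. Equivalently, for x uniform on {0,…,M−1}ⁿ, with probability at least 1 − (3/4)ⁿ every nonzero integer vector c with c·x = 0 satisfies ‖c‖∞ > M^{1/n}/4. -/

import Mathlib

open scoped Classical

lemma card_ne_subtype {n : ℕ} (i : Fin n) : Fintype.card {j : Fin n // j ≠ i} = n - 1 := by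
  simp [Fintype.card_subtype_compl]

/-- For a fixed nonzero `c`, at most `M^(n-1)` vectors `x ∈ {0,…,M-1}ⁿ`
satisfy `∑ cᵢ xᵢ = 0`. -/
lemma count_fixed {n : ℕ} (M : ℕ) (c : Fin n → ℤ) (hc : c ≠ 0) :
    ((Fintype.piFinset fun _ : Fin n => Finset.Icc (0 : ℤ) ((M : ℤ) - 1)).filter
      (fun x => ∑ i, c i * x i = 0)).card ≤ M ^ (n - 1) := by
  obtain ⟨i, hi'⟩ := Function.ne_iff.mp hc
  have hi : c i ≠ 0 := by simpa using hi'
  have htarget : (Fintype.piFinset fun _ : {j : Fin n // j ≠ i} =>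
      Finset.Icc (0 : ℤ) ((M : ℤ) - 1)).card = M ^ (n - 1) := by
    rw [Fintype.card_piFinset, Finset.prod_const, Int.card_Icc, Finset.card_univ, card_ne_subtype]
    norm_num
  rw [← htarget]
  apply Finset.card_le_card_of_injOn (fun x => fun j : {j : Fin n // j ≠ i} => x j.1)
  · intro x hx
    simp only [Finset.mem_coe, Finset.mem_filter, Fintype.mem_piFinset] at hx ⊢
    intro j
    exact hx.1 j.1
  · intro x hx y hy h
    simp only [Finset.coe_filter, Set.mem_setOf_eq] at hx hy
    have hxy : ∀ j : Fin n, j ≠ i → x j = y j := fun j hj => congrFun h ⟨j, hj⟩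
    have hex := Finset.add_sum_erase Finset.univ (fun k => c k * x k) (Finset.mem_univ i)
    have hey := Finset.add_sum_erase Finset.univ (fun k => c k * y k) (Finset.mem_univ i)
    have hsum : ∑ k ∈ Finset.univ.erase i, c k * x k
        = ∑ k ∈ Finset.univ.erase i, c k * y k := by
      refine Finset.sum_congr rfl fun k hk => ?_
      rw [hxy k (Finset.ne_of_mem_erase hk)]
    have hxi : x i = y i := by
      have : c i * x i = c i * y i := by
        rw [hx.2] at hex; rw [hy.2] at hey; linarith [hex, hey, hsum]
      exact mul_left_cancel₀ hi this
    funext j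
    by_cases hj : j = i
    · rw [hj]; exact hxi
    · exact hxy j hj

theorem first_minimum_large_whp (n : ℕ) (hn : 1 ≤ n) (M : ℕ) (hM : 4 ^ n ≤ M)
    (d₀ : ℤ) (hd₀ : d₀ = ⌊(M : ℝ) ^ ((1 : ℝ) / n) / 4⌋) :
    ((((Fintype.piFinset fun _ : Fin n => Finset.Icc (0 : ℤ) ((M : ℤ) - 1)).filter
          (fun x => ∃ c : Fin n → ℤ, c ≠ 0 ∧ (∀ i, |c i| ≤ d₀) ∧
            ∑ i, c i * x i = 0)).card : ℝ)
        ≤ (3 / 4 : ℝ) ^ n * (M : ℝ) ^ n) ∧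
    ((1 - (3 / 4 : ℝ) ^ n) * (M : ℝ) ^ n
        ≤ (((Fintype.piFinset fun _ : Fin n => Finset.Icc (0 : ℤ) ((M : ℤ) - 1)).filter
            (fun x => ∀ c : Fin n → ℤ, c ≠ 0 → ∑ i, c i * x i = 0 →
              (M : ℝ) ^ ((1 : ℝ) / n) / 4 < ‖c‖)).card : ℝ)) := by
  set r : ℝ := (M : ℝ) ^ ((1 : ℝ) / n) with hr
  have hn0 : (n : ℝ) ≠ 0 := by positivity
  have hM1 : 1 ≤ M := le_trans (Nat.one_le_pow _ _ (by norm_num)) hM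
  have hM0 : (0 : ℝ) ≤ (M : ℝ) := by positivity
  have hrn : r ^ n = (M : ℝ) := by
    rw [hr, ← Real.rpow_natCast (_ ^ _) n, ← Real.rpow_mul hM0]
    rw [one_div, inv_mul_cancel₀ hn0, Real.rpow_one]
  have hr4 : (4 : ℝ) ≤ r := by
    have h1 : ((4 : ℝ) ^ n) ^ ((1 : ℝ) / n) ≤ r := by
      apply Real.rpow_le_rpow (by positivity) _ (by positivity)
      exact_mod_cast hM
    have h2 : ((4 : ℝ) ^ n) ^ ((1 : ℝ) / n) = 4 := by
      rw [← Real.rpow_natCast (4 : ℝ) n, ← Real.rpow_mul (by norm_num)]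
      rw [mul_one_div, div_self hn0, Real.rpow_one]
    linarith
  have hr0 : (0 : ℝ) ≤ r := by linarith
  have hd₀le : (d₀ : ℝ) ≤ r / 4 := hd₀ ▸ Int.floor_le _
  have hd₀1 : 1 ≤ d₀ := by
    rw [hd₀, Int.le_floor]; push_cast; linarith
  -- the bad set and the nonzero bounded coefficient set
  set X := Fintype.piFinset fun _ : Fin n => Finset.Icc (0 : ℤ) ((M : ℤ) - 1) with hX
  set P₁ : (Fin n → ℤ) → Prop := fun x => ∃ c : Fin n → ℤ, c ≠ 0 ∧ (∀ i, |c i| ≤ d₀) ∧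
      ∑ i, c i * x i = 0 with hP₁
  set C := (Fintype.piFinset fun _ : Fin n => Finset.Icc (-d₀) d₀).filter
      (fun c => c ≠ (0 : Fin n → ℤ)) with hC
  have hsub : X.filter P₁ ⊆ C.biUnion (fun c => X.filter (fun x => ∑ i, c i * x i = 0)) := by
    intro x hx
    rw [Finset.mem_filter] at hx
    obtain ⟨hxX, c, hc0, hcb, hcs⟩ := hx
    apply Finset.mem_biUnion.mpr
    refine ⟨c, ?_, ?_⟩
    · rw [hC, Finset.mem_filter, Fintype.mem_piFinset]
      exact ⟨fun i => Finset.mem_Icc.mpr (abs_le.mp (hcb i)), hc0⟩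
    · exact Finset.mem_filter.mpr ⟨hxX, hcs⟩
  have hCcard : C.card ≤ (2 * d₀ + 1).toNat ^ n := by
    calc C.card ≤ (Fintype.piFinset fun _ : Fin n => Finset.Icc (-d₀) d₀).card :=
          Finset.card_filter_le _ _
      _ = (2 * d₀ + 1).toNat ^ n := by
          rw [Fintype.card_piFinset, Finset.prod_const, Int.card_Icc]
          norm_num; ring_nf
  have hbad : (X.filter P₁).card ≤ (2 * d₀ + 1).toNat ^ n * M ^ (n - 1) := by
    calc (X.filter P₁).card
        ≤ (C.biUnion (fun c => X.filter (fun x => ∑ i, c i * x i = 0))).card :=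
          Finset.card_le_card hsub
      _ ≤ ∑ c ∈ C, (X.filter (fun x => ∑ i, c i * x i = 0)).card :=
          Finset.card_biUnion_le
      _ ≤ ∑ _c ∈ C, M ^ (n - 1) := by
          refine Finset.sum_le_sum fun c hc => ?_
          exact count_fixed M c ((Finset.mem_filter.mp hc).2)
      _ = C.card * M ^ (n - 1) := by rw [Finset.sum_const, smul_eq_mul]
      _ ≤ (2 * d₀ + 1).toNat ^ n * M ^ (n - 1) :=
          Nat.mul_le_mul_right _ hCcard
  -- real bound for the bad set
  have ht : ((2 * d₀ + 1).toNat : ℝ) = 2 * (d₀ : ℝ) + 1 := by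
    have h : ((2 * d₀ + 1).toNat : ℤ) = 2 * d₀ + 1 := Int.toNat_of_nonneg (by omega)
    exact_mod_cast h
  have hbadR : ((X.filter P₁).card : ℝ) ≤ (3 / 4 : ℝ) ^ n * (M : ℝ) ^ n := by
    have h1 : ((X.filter P₁).card : ℝ) ≤ ((2 * d₀ + 1).toNat : ℝ) ^ n * (M : ℝ) ^ (n - 1) := by
      exact_mod_cast hbad
    have h2 : ((2 * d₀ + 1).toNat : ℝ) ≤ (3 / 4) * r := by
      rw [ht]; linarith
    have h3 : ((2 * d₀ + 1).toNat : ℝ) ^ n ≤ ((3 / 4) * r) ^ n :=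
      pow_le_pow_left₀ (by positivity) h2 n
    have h4 : ((3 / 4 : ℝ) * r) ^ n = (3 / 4 : ℝ) ^ n * (M : ℝ) := by
      rw [mul_pow, hrn]
    have h5 : (M : ℝ) * (M : ℝ) ^ (n - 1) = (M : ℝ) ^ n := by
      rw [← pow_succ']; congr 1; omega
    calc ((X.filter P₁).card : ℝ)
        ≤ ((2 * d₀ + 1).toNat : ℝ) ^ n * (M : ℝ) ^ (n - 1) := h1
      _ ≤ ((3 / 4) * r) ^ n * (M : ℝ) ^ (n - 1) := by
          apply mul_le_mul_of_nonneg_right h3 (by positivity)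
      _ = (3 / 4 : ℝ) ^ n * ((M : ℝ) * (M : ℝ) ^ (n - 1)) := by rw [h4]; ring
      _ = (3 / 4 : ℝ) ^ n * (M : ℝ) ^ n := by rw [h5]
  refine ⟨hbadR, ?_⟩
  -- second part
  set P₂ : (Fin n → ℤ) → Prop := fun x => ∀ c : Fin n → ℤ, c ≠ 0 → ∑ i, c i * x i = 0 →
      r / 4 < ‖c‖ with hP₂
  have himp : ∀ x, ¬ P₁ x → P₂ x := by
    intro x hnp c hc0 hcs
    by_contra hlt
    push_neg at hlt
    apply hnp
    refine ⟨c, hc0, fun i => ?_, hcs⟩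
    rw [hd₀, Int.le_floor]
    have h1 : ‖c i‖ ≤ ‖c‖ := norm_le_pi_norm c i
    rw [Int.norm_eq_abs] at h1
    push_cast
    linarith
  have hXcard : X.card = M ^ n := by
    rw [hX, Fintype.card_piFinset, Finset.prod_const, Int.card_Icc, Finset.card_univ,
      Fintype.card_fin]
    norm_num
  have hsplit : (X.filter P₁).card + (X.filter (fun x => ¬ P₁ x)).card = M ^ n := by
    rw [Finset.card_filter_add_card_filter_not, hXcard]
  have hmono : (X.filter (fun x => ¬ P₁ x)).card ≤ (X.filter P₂).card :=
    Finset.card_le_card (Finset.monotone_filter_right X (fun x _ hx => himp x hx))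
  have hfinal : ((X.filter P₂).card : ℝ) ≥ (M : ℝ) ^ n - ((X.filter P₁).card : ℝ) := by
    have := hsplit
    have h1 : ((X.filter (fun x => ¬ P₁ x)).card : ℝ)
        = (M : ℝ) ^ n - ((X.filter P₁).card : ℝ) := by
      have : ((X.filter P₁).card : ℝ) + ((X.filter (fun x => ¬ P₁ x)).card : ℝ)
          = (M : ℝ) ^ n := by exact_mod_cast hsplit
      linarith
    have h2 : ((X.filter (fun x => ¬ P₁ x)).card : ℝ) ≤ ((X.filter P₂).card : ℝ) := by
      exact_mod_cast hmono
    linarith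
  have : (1 - (3 / 4 : ℝ) ^ n) * (M : ℝ) ^ n = (M : ℝ) ^ n - (3 / 4 : ℝ) ^ n * (M : ℝ) ^ n := by
    ring
  rw [this]
  calc (M : ℝ) ^ n - (3 / 4 : ℝ) ^ n * (M : ℝ) ^ n
      ≤ (M : ℝ) ^ n - ((X.filter P₁).card : ℝ) := by linarith
    _ ≤ ((X.filter P₂).card : ℝ) := hfinal
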